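/- Let N be a commutative group and E a type, and let dil : N → E → E → E be a dilation structure. Then the approximate difference can be computed from the approximate sum and the approximate inverse: for all a ∈ N and e, x, y ∈ E, Σ a (dil a e x) (ι a e x) y = Δ a e x y. -/
import Mathlib

/-- Approximate sum: `Σ a e x y := dil a⁻¹ e (dil a (dil a e x) y)`. -/
def emAsum {N E : Type*} [CommGroup N] (dil : N → E → E → E) (a : N)
    (e x y : E) : E :=
  dil a⁻¹ e (dil a (dil a e x) y)

/-- Approximate difference: `Δ a e x y := dil a⁻¹ (dil a e x) (dil a e y)`. -/
def emAdif {N E : Type*} [CommGroup N] (dil : N → E → E → E) (a : N)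
    (e x y : E) : E :=
  dil a⁻¹ (dil a e x) (dil a e y)

/-- Approximate inverse: `ι a e x := dil a⁻¹ (dil a e x) e`. -/
def emAinv {N E : Type*} [CommGroup N] (dil : N → E → E → E) (a : N)
    (e x : E) : E :=
  dil a⁻¹ (dil a e x) e

theorem stmt_10 (N E : Type*) [CommGroup N] (dil : N → E → E → E)
    (hid : ∀ e x : E, dil 1 e x = x)
    (hact : ∀ (a b : N) (e x : E), dil a e (dil b e x) = dil (a * b) e x)
    (hR1 : ∀ (a : N) (x : E), dil a x x = x) :
    ∀ (a : N) (e x y : E),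
      emAsum dil a (dil a e x) (emAinv dil a e x) y = emAdif dil a e x y := by
  intro a e x y
  unfold emAsum emAinv emAdif
  rw [hact, mul_inv_cancel, hid]
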